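/- For a modular datum, the fusion ring F is a commutative associative ring with unit b_o, and the algebra F ⊗ K is isomorphic as a K-algebra to the function algebra K^I via b ↦ (ξ_i(b))_{i∈I}. -/

import Mathlib

open Finset

/-- A modular datum over a field `K` of characteristic zero: a finite index set `I` with a
distinguished element `o`, an involution `star` fixing `o`, a symmetric Verlinde matrix `S`
with nonzero first column, a diagonal Dehn matrix with entries `T i` of finite order
satisfying `T (star i) = T i`, such that `S² = n·C` for a nonzero global dimension `n`
(where `C = (δ_{i,j*})`), the matrices `T⁻¹ST⁻¹` and `STS` are proportional, and the
Verlinde numbers `N_{ij}^k` are nonnegative integers. -/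
structure ModularDatum (K : Type*) [Field K] [CharZero K]
    (I : Type*) [Fintype I] [DecidableEq I] where
  o : I
  star : I → I
  S : Matrix I I K
  T : I → K
  n : K
  star_involutive : Function.Involutive star
  star_o : star o = o
  S_symm : ∀ i j, S i j = S j i
  S_io_ne : ∀ i, S i o ≠ 0
  T_star : ∀ i, T (star i) = T i
  T_order : ∃ N : ℕ, 0 < N ∧ ∀ i, T i ^ N = 1
  n_ne : n ≠ 0
  S_sq : ∀ i k, (∑ j, S i j * S j k) = n * (if i = star k then 1 else 0)
  proportional : ∃ c : K, ∀ i j,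
    (T i)⁻¹ * S i j * (T j)⁻¹ = c * ∑ k, S i k * T k * S k j
  verlinde : ∀ i j k, ∃ m : ℕ,
    (1 / n) * ∑ l, S i l * S j l * S (star k) l / S o l = (m : K)

namespace ModularDatum

variable {K : Type*} [Field K] [CharZero K] {I : Type*} [Fintype I] [DecidableEq I]
variable (d : ModularDatum K I)

/-- The `i`-th dimension `n_i = s_{io}`. -/
def ni (i : I) : K := d.S i d.o

/-- The Gaussian sum `g = Σ_i n_i² t_i`. -/
def gauss : K := ∑ i, d.ni i ^ 2 * d.T i

/-- The reciprocal Gaussian sum `g' = Σ_i n_i² / t_i`. -/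
def gauss' : K := ∑ i, d.ni i ^ 2 * (d.T i)⁻¹

/-- The Verlinde numbers `N_{ij}^k = (1/n) Σ_l s_{il} s_{jl} s_{k*l} / s_{ol}`. -/
def Nc (i j k : I) : K := (1 / d.n) * ∑ l, d.S i l * d.S j l * d.S (d.star k) l / d.S d.o l

end ModularDatum

namespace ModularDatum

variable {K : Type*} [Field K] [CharZero K] {I : Type*} [Fintype I] [DecidableEq I]

/-- The fusion multiplication on `F ⊗ K ≅ K^I` (coordinates with respect to the basis
`{b_i}`), given by the structure constants `N_{ij}^k`. -/
def fmul (d : ModularDatum K I) (x y : I → K) : I → K :=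
  fun k => ∑ i, ∑ j, x i * y j * d.Nc i j k

/-- The coordinate vector of the unit element `b_o`. -/
def funit (d : ModularDatum K I) : I → K := fun k => if k = d.o then 1 else 0

/-- The map `F ⊗ K → K^I`, `b ↦ (ξ_q(b))_q`, where `ξ_q(b_i) = s_{iq}/n_q`. -/
def xiMap (d : ModularDatum K I) (x : I → K) : I → K :=
  fun q => ∑ i, x i * (d.S i q / d.ni q)

end ModularDatum

namespace ModularDatum

variable {K : Type*} [Field K] [CharZero K] {I : Type*} [Fintype I] [DecidableEq I]
variable (d : ModularDatum K I)

lemma S_oq_ne (q : I) : d.S d.o q ≠ 0 := by rw [d.S_symm]; exact d.S_io_ne q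

lemma ni_ne (q : I) : d.ni q ≠ 0 := d.S_io_ne q

lemma S_star' (i j : I) : d.S (d.star i) j = d.S i (d.star j) := by
  have h1 : ∑ k, (∑ m, d.S i m * d.S m k) * d.S k j = d.n * d.S (d.star i) j := by
    simp only [d.S_sq]
    have : ∀ k, d.n * (if i = d.star k then (1:K) else 0) * d.S k j
        = if k = d.star i then d.n * d.S k j else 0 := by
      intro k
      by_cases h : k = d.star i
      · subst h; rw [if_pos (d.star_involutive i).symm, if_pos rfl]; ring
      · rw [if_neg, if_neg h]
        · ring
        · intro hc; exact h (by rw [hc, d.star_involutive])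
    simp only [this, Finset.sum_ite_eq' Finset.univ (d.star i), Finset.mem_univ, if_pos]
  have h2 : ∑ k, (∑ m, d.S i m * d.S m k) * d.S k j = d.n * d.S i (d.star j) := by
    simp only [Finset.sum_mul]
    rw [Finset.sum_comm]
    have : ∀ m, ∑ k, d.S i m * d.S m k * d.S k j = d.S i m * (∑ k, d.S m k * d.S k j) := by
      intro m; rw [Finset.mul_sum]; exact Finset.sum_congr rfl fun k _ => by ring
    simp only [this, d.S_sq, mul_ite, mul_one, mul_zero,
      Finset.sum_ite_eq' Finset.univ (d.star j), Finset.mem_univ, if_pos]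
    ring
  exact mul_left_cancel₀ d.n_ne (h1.symm.trans h2)

lemma key (l q : I) : ∑ k, d.S (d.star k) l * d.S k q = d.n * (if l = q then 1 else 0) := by
  have h : ∀ k, d.S (d.star k) l = d.S (d.star l) k := by
    intro k; rw [d.S_star', d.S_symm]
  simp only [h]
  rw [d.S_sq]
  congr 1
  by_cases h : l = q
  · rw [if_pos h, if_pos (by rw [h])]
  · rw [if_neg h, if_neg fun hc => h (d.star_involutive.injective hc)]

lemma key2 (l q : I) : ∑ k, d.S l k * d.S (d.star k) q = d.n * (if l = q then 1 else 0) := by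
  have h : ∀ k, d.S l k * d.S (d.star k) q = d.S (d.star k) q * d.S k l := by
    intro k; rw [d.S_symm l k]; ring
  simp only [h]
  rw [d.key q l]
  congr 1
  by_cases h : l = q
  · rw [if_pos h, if_pos h.symm]
  · rw [if_neg h, if_neg (Ne.symm h)]

lemma Nc_S (i j q : I) : ∑ k, d.Nc i j k * d.S k q = d.S i q * d.S j q / d.S d.o q := by
  unfold Nc
  have h : ∀ k, (1 / d.n) * (∑ l, d.S i l * d.S j l * d.S (d.star k) l / d.S d.o l) * d.S k q
      = (1 / d.n) * ∑ l, (d.S i l * d.S j l / d.S d.o l) * (d.S (d.star k) l * d.S k q) := by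
    intro k
    rw [mul_assoc, Finset.sum_mul, Finset.mul_sum, Finset.mul_sum]
    exact Finset.sum_congr rfl fun l _ => by ring
  simp only [h]
  rw [← Finset.mul_sum, Finset.sum_comm]
  have h2 : ∀ l, ∑ k, (d.S i l * d.S j l / d.S d.o l) * (d.S (d.star k) l * d.S k q)
      = (d.S i l * d.S j l / d.S d.o l) * (d.n * (if l = q then 1 else 0)) := by
    intro l; rw [← Finset.mul_sum, d.key]
  simp only [h2, mul_ite, mul_one, mul_zero,
    Finset.sum_ite_eq' Finset.univ q, Finset.mem_univ, if_pos]
  have hn := d.n_ne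
  have h0 := d.S_oq_ne q
  field_simp

lemma xiMap_mul (x y : I → K) :
    d.xiMap (d.fmul x y) = fun q => d.xiMap x q * d.xiMap y q := by
  funext q
  unfold xiMap fmul
  have hno : d.ni q = d.S d.o q := d.S_symm q d.o
  have h : ∀ k, (∑ i, ∑ j, x i * y j * d.Nc i j k) * (d.S k q / d.ni q)
      = ∑ i, ∑ j, (x i * y j / d.ni q) * (d.Nc i j k * d.S k q) := by
    intro k
    rw [Finset.sum_mul]
    refine Finset.sum_congr rfl fun i _ => ?_
    rw [Finset.sum_mul]
    exact Finset.sum_congr rfl fun j _ => by ring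
  simp only [h]
  rw [Finset.sum_comm]
  have h2 : ∀ i, ∑ k, ∑ j, (x i * y j / d.ni q) * (d.Nc i j k * d.S k q)
      = ∑ j, (x i * y j / d.ni q) * (d.S i q * d.S j q / d.S d.o q) := by
    intro i
    rw [Finset.sum_comm]
    refine Finset.sum_congr rfl fun j _ => ?_
    rw [← Finset.mul_sum, d.Nc_S]
  simp only [h2]
  rw [Finset.sum_mul]
  refine Finset.sum_congr rfl fun i _ => ?_
  rw [Finset.mul_sum]
  refine Finset.sum_congr rfl fun j _ => ?_
  have h0 := d.S_oq_ne q
  rw [hno]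
  field_simp

lemma xiMap_unit : d.xiMap d.funit = fun _ => 1 := by
  funext q
  unfold xiMap funit
  simp only [ite_mul, one_mul, zero_mul,
    Finset.sum_ite_eq' Finset.univ d.o, Finset.mem_univ, if_pos]
  have hno : d.ni q = d.S d.o q := d.S_symm q d.o
  rw [hno, div_self (d.S_oq_ne q)]

/-- Inverse of `xiMap`. -/
def xiInv (d : ModularDatum K I) (y : I → K) : I → K :=
  fun i => (1 / d.n) * ∑ q, y q * d.ni q * d.S q (d.star i)

lemma xiInv_xiMap (x : I → K) : d.xiInv (d.xiMap x) = x := by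
  funext i
  unfold xiInv xiMap
  have h : ∀ q, (∑ j, x j * (d.S j q / d.ni q)) * d.ni q * d.S q (d.star i)
      = ∑ j, x j * (d.S j q * d.S q (d.star i)) := by
    intro q
    rw [Finset.sum_mul, Finset.sum_mul]
    refine Finset.sum_congr rfl fun j _ => ?_
    have := d.ni_ne q
    field_simp
  simp only [h]
  rw [Finset.sum_comm]
  have h2 : ∀ j, ∑ q, x j * (d.S j q * d.S q (d.star i))
      = x j * (d.n * (if j = i then 1 else 0)) := by
    intro j
    rw [← Finset.mul_sum]
    congr 1
    rw [d.S_sq]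
    congr 1
    by_cases h : j = i
    · rw [if_pos (by rw [h]; exact (d.star_involutive i).symm), if_pos h]
    · rw [if_neg fun hc => h (by rw [hc, d.star_involutive]), if_neg h]
  simp only [h2, mul_ite, mul_one, mul_zero,
    Finset.sum_ite_eq' Finset.univ i, Finset.mem_univ, if_pos]
  have hn := d.n_ne
  field_simp

lemma xiMap_xiInv (y : I → K) : d.xiMap (d.xiInv y) = y := by
  funext q'
  unfold xiInv xiMap
  have h : ∀ i, (1 / d.n) * (∑ q, y q * d.ni q * d.S q (d.star i)) * (d.S i q' / d.ni q')
      = (1 / d.n / d.ni q') * ∑ q, (y q * d.ni q) * (d.S (d.star i) q * d.S i q') := by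
    intro i
    rw [mul_assoc, Finset.sum_mul, Finset.mul_sum, Finset.mul_sum]
    refine Finset.sum_congr rfl fun q _ => ?_
    rw [d.S_symm (d.star i) q]
    have hn := d.n_ne
    have hq' := d.ni_ne q'
    field_simp
  simp only [h]
  rw [← Finset.mul_sum, Finset.sum_comm]
  have h2 : ∀ q, ∑ i, (y q * d.ni q) * (d.S (d.star i) q * d.S i q')
      = (y q * d.ni q) * (d.n * (if q = q' then 1 else 0)) := by
    intro q
    rw [← Finset.mul_sum, d.key]
  simp only [h2, mul_ite, mul_one, mul_zero,
    Finset.sum_ite_eq' Finset.univ q', Finset.mem_univ, if_pos]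
  have hn := d.n_ne
  have hni := d.ni_ne q'
  field_simp

lemma xiMap_bijective : Function.Bijective d.xiMap :=
  Function.bijective_iff_has_inverse.2 ⟨d.xiInv, d.xiInv_xiMap, d.xiMap_xiInv⟩

end ModularDatum

/-- For a modular datum, the fusion ring is a commutative associative ring with unit `b_o`,
and `F ⊗ K` is isomorphic as a `K`-algebra to the function algebra `K^I` via
`b ↦ (ξ_i(b))_{i∈I}`. -/
theorem ModularDatum.fusion_ring_iso {K : Type*} [Field K] [CharZero K]
    {I : Type*} [Fintype I] [DecidableEq I] (d : ModularDatum K I) :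
    (∀ x y, d.fmul x y = d.fmul y x) ∧
    (∀ x y z, d.fmul (d.fmul x y) z = d.fmul x (d.fmul y z)) ∧
    (∀ x, d.fmul d.funit x = x) ∧
    Function.Bijective d.xiMap ∧
    (∀ x y, d.xiMap (d.fmul x y) = fun q => d.xiMap x q * d.xiMap y q) ∧
    d.xiMap d.funit = fun _ => 1 := by
  have hinj := d.xiMap_bijective.injective
  refine ⟨fun x y => hinj ?_, fun x y z => hinj ?_, fun x => hinj ?_,
    d.xiMap_bijective, d.xiMap_mul, d.xiMap_unit⟩
  · rw [d.xiMap_mul, d.xiMap_mul]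
    funext q; ring
  · rw [d.xiMap_mul, d.xiMap_mul, d.xiMap_mul, d.xiMap_mul]
    funext q; ring
  · rw [d.xiMap_mul, d.xiMap_unit]
    funext q; simp
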